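/- arXiv:2508.00184 — 2 statements merged into one kernel-verified Lean document; each statement's English description precedes it below -/
import Mathlib

section
/- Let φ : ℝ → ℝ be an L-biLipschitz homeomorphism with inverse ψ, and suppose φ' exists almost everywhere with 1/L ≤ |φ'| ≤ L of constant sign. Define x(x̃, y) = (φ(x̃ + y) + φ(x̃ − y))/2 and ỹ(x̃, y) = (φ(x̃ + y) − φ(x̃ − y))/2, let x̃(x, y) be the inverse of x̃ ↦ x(x̃, y) for fixed y, and Ψ(x, y) = (x̃(x,y), ỹ(x̃(x,y), y)). Then Ψ : ℝ² → ℝ² is a 2L³-biLipschitz, area-preserving homeomorphism of the plane satisfying Ψ(x, 0) = (ψ(x), 0) for all x ∈ ℝ. -/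
set_option maxHeartbeats 1000000

open Set MeasureTheory


section TukiaAux

variable {L : ℝ} {φ : ℝ → ℝ}

lemma tk_Lpos (hL : 1 ≤ L) : 0 < L := lt_of_lt_of_le one_pos hL

lemma tk_lip (hL : 1 ≤ L)
    (hbl : ∀ s t : ℝ, L⁻¹ * |s - t| ≤ |φ s - φ t| ∧ |φ s - φ t| ≤ L * |s - t|) :
    LipschitzWith L.toNNReal φ := by
  apply LipschitzWith.of_dist_le_mul
  intro s t
  rw [Real.dist_eq, Real.dist_eq, Real.coe_toNNReal L (le_of_lt (tk_Lpos hL))]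
  exact (hbl s t).2

lemma tk_cont (hL : 1 ≤ L)
    (hbl : ∀ s t : ℝ, L⁻¹ * |s - t| ≤ |φ s - φ t| ∧ |φ s - φ t| ≤ L * |s - t|) :
    Continuous φ := (tk_lip hL hbl).continuous

lemma tk_low (hL : 1 ≤ L)
    (hbl : ∀ s t : ℝ, L⁻¹ * |s - t| ≤ |φ s - φ t| ∧ |φ s - φ t| ≤ L * |s - t|)
    (s t : ℝ) : |s - t| ≤ L * |φ s - φ t| := by
  have h := (hbl s t).1
  have hLpos := tk_Lpos hL
  calc |s - t| = L * (L⁻¹ * |s - t|) := by field_simp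
  _ ≤ L * |φ s - φ t| := by
      apply mul_le_mul_of_nonneg_left h (le_of_lt hLpos)

lemma tk_sign (hmono : Monotone φ ∨ Antitone φ) (s t s' t' : ℝ)
    (h : 0 ≤ (s - t) * (s' - t')) : 0 ≤ (φ s - φ t) * (φ s' - φ t') := by
  have key : ∀ ρ : ℝ → ℝ, Monotone ρ → 0 ≤ (ρ s - ρ t) * (ρ s' - ρ t') := by
    intro ρ hρ
    rcases le_total s t with h1 | h1 <;> rcases le_total s' t' with h2 | h2
    · have e1 : ρ s ≤ ρ t := hρ h1
      have e2 : ρ s' ≤ ρ t' := hρ h2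
      nlinarith
    · -- mixed : (s-t) ≤ 0, (s'-t') ≥ 0, product ≤ 0 so product = 0
      rcases mul_eq_zero.1 (le_antisymm (mul_nonpos_of_nonpos_of_nonneg (by linarith) (by linarith)) h) with h3 | h3
      · have : s = t := by linarith
        rw [this]; simp
      · have : s' = t' := by linarith
        rw [this]; simp
    · rcases mul_eq_zero.1 (le_antisymm (mul_nonpos_of_nonneg_of_nonpos (by linarith) (by linarith)) h) with h3 | h3
      · have : s = t := by linarith
        rw [this]; simp
      · have : s' = t' := by linarith
        rw [this]; simp
    · exact mul_nonneg (by linarith [hρ h1]) (by linarith [hρ h2])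
  rcases hmono with hm | hm
  · exact key φ hm
  · have := key (fun x => -φ x) (fun a b hab => by simp [hm hab])
    nlinarith [this]

lemma tk_cancel (hL : 1 ≤ L)
    (hbl : ∀ s t : ℝ, L⁻¹ * |s - t| ≤ |φ s - φ t| ∧ |φ s - φ t| ≤ L * |s - t|)
    (hmono : Monotone φ ∨ Antitone φ) (a b c d : ℝ)
    (h : 0 < (a - b) * (c - d)) : φ a - φ b + (φ c - φ d) ≠ 0 := by
  intro heq
  have h1 : 0 ≤ (φ a - φ b) * (φ c - φ d) := tk_sign hmono a b c d (le_of_lt h)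
  have h2 : φ c - φ d = -(φ a - φ b) := by linarith
  rw [h2] at h1
  have h3 : φ a - φ b = 0 := by nlinarith
  have h4 := tk_low hL hbl a b
  rw [h3] at h4
  simp at h4
  have : a = b := by
    have := abs_nonneg (a - b)
    have : |a - b| = 0 := le_antisymm (by simpa using h4) this
    have := abs_eq_zero.1 this
    linarith
  rw [this] at h
  simp at h

end TukiaAux
section T2
variable {L : ℝ} {φ : ℝ → ℝ}

lemma quad_ub (hL : 1 ≤ L) (a b α β : ℝ) (h1 : α^2 ≤ L^2*a^2) (h2 : β^2 ≤ L^2*b^2) :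
    (α+β)^2 + (a-b)^2 ≤ 4*L^2*(a^2+b^2) := by
  have hL2 : (0:ℝ) ≤ L^2 - 1 := by nlinarith
  nlinarith [sq_nonneg (α-β), sq_nonneg (a+b), mul_nonneg hL2 (add_nonneg (sq_nonneg a) (sq_nonneg b))]

lemma quad_lb (hL : 1 ≤ L) (a b α β : ℝ) (h1 : a^2 ≤ L^2*α^2) (h2 : b^2 ≤ L^2*β^2)
    (hs : (0 ≤ a*b ∧ 0 ≤ α*β) ∨ (a*b ≤ 0 ∧ α*β ≤ 0)) :
    a^2 + b^2 ≤ L^2*((α+β)^2 + (a-b)^2) := by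
  rcases hs with ⟨hab, hαβ⟩ | ⟨hab, hαβ⟩
  · nlinarith [sq_nonneg (a-b), sq_nonneg L]
  · have hL2 : (0:ℝ) ≤ L^2 - 1 := by nlinarith
    nlinarith [mul_nonneg hL2 (sq_nonneg (a-b)), mul_nonneg (sq_nonneg L) (sq_nonneg (α+β))]

-- abs to squares
lemma abs_le_sq {x y : ℝ} (h : |x| ≤ |y|) : x^2 ≤ y^2 := by
  nlinarith [abs_nonneg x, sq_abs x, sq_abs y]

lemma tk_sq_ub (hL : 1 ≤ L)
    (hbl : ∀ s t : ℝ, L⁻¹ * |s - t| ≤ |φ s - φ t| ∧ |φ s - φ t| ≤ L * |s - t|)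
    (s t : ℝ) : (φ s - φ t)^2 ≤ L^2 * (s-t)^2 := by
  have h := (hbl s t).2
  have : |φ s - φ t| ≤ |L * (s-t)| := by
    rwa [abs_mul, abs_of_pos (lt_of_lt_of_le one_pos hL)]
  have := abs_le_sq this
  nlinarith

lemma tk_sq_lb (hL : 1 ≤ L)
    (hbl : ∀ s t : ℝ, L⁻¹ * |s - t| ≤ |φ s - φ t| ∧ |φ s - φ t| ≤ L * |s - t|)
    (s t : ℝ) : (s-t)^2 ≤ L^2 * (φ s - φ t)^2 := by
  have hLpos : (0:ℝ) < L := lt_of_lt_of_le one_pos hL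
  have h : |s - t| ≤ L * |φ s - φ t| := by
    have h := (hbl s t).1
    calc |s - t| = L * (L⁻¹ * |s - t|) := by field_simp
    _ ≤ L * |φ s - φ t| := mul_le_mul_of_nonneg_left h (le_of_lt hLpos)
  have : |s - t| ≤ |L * (φ s - φ t)| := by rwa [abs_mul, abs_of_pos hLpos]
  have := abs_le_sq this
  nlinarith

end T2
section T3
variable {L : ℝ} {φ : ℝ → ℝ}

lemma abs_add_of_mul_nonneg {X Y : ℝ} (h : 0 ≤ X*Y) : |X + Y| = |X| + |Y| := by
  refine le_antisymm (abs_add_le X Y) ?_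
  have h1 : |X| * |Y| = X * Y := by rw [← abs_mul]; exact abs_of_nonneg h
  nlinarith [sq_abs (X+Y), abs_nonneg (X+Y), abs_nonneg X, abs_nonneg Y, sq_abs X, sq_abs Y,
    sq_nonneg (|X+Y| - (|X|+|Y|)), sq_nonneg (|X+Y| + |X|+|Y|)]

lemma tk_ivt (hL : 1 ≤ L) (k : ℝ → ℝ) (hk : Continuous k)
    (hexp : ∀ u : ℝ, 2*|u|/L ≤ |k u - k 0|) (hm : Monotone k ∨ Antitone k) :
    Function.Surjective k := by
  have hLpos : (0:ℝ) < L := lt_of_lt_of_le one_pos hL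
  have main : ∀ (k : ℝ → ℝ), Continuous k → (∀ u : ℝ, 2*|u|/L ≤ |k u - k 0|) →
      Monotone k → Function.Surjective k := by
    intro k hk hexp hmono t
    set R : ℝ := L * |t - k 0| with hR
    have hR0 : 0 ≤ R := mul_nonneg (le_of_lt hLpos) (abs_nonneg _)
    have h2R : 2*|R|/L = 2 * |t - k 0| := by
      rw [abs_of_nonneg hR0, hR]
      field_simp
    have hup : t ≤ k R := by
      have h1 := hexp R
      rw [h2R] at h1
      have h2 : k 0 ≤ k R := hmono hR0
      rw [abs_of_nonneg (by linarith : (0:ℝ) ≤ k R - k 0)] at h1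
      have h3 := le_abs_self (t - k 0)
      have h4 := abs_nonneg (t - k 0)
      linarith
    have hdown : k (-R) ≤ t := by
      have h1 := hexp (-R)
      rw [abs_neg, h2R] at h1
      have h2 : k (-R) ≤ k 0 := hmono (by linarith : -R ≤ 0)
      rw [abs_of_nonpos (by linarith : k (-R) - k 0 ≤ 0)] at h1
      have h3 := neg_le_abs (t - k 0)
      have h4 := abs_nonneg (t - k 0)
      linarith
    have : t ∈ Icc (k (-R)) (k R) := ⟨hdown, hup⟩
    have hsub := intermediate_value_Icc (by linarith : -R ≤ R) hk.continuousOn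
    obtain ⟨u, _, hu⟩ := hsub this
    exact ⟨u, hu⟩
  rcases hm with hmono | hanti
  · exact main k hk hexp hmono
  · have h1 : ∀ u : ℝ, 2*|u|/L ≤ |(-k u) - (-k 0)| := by
      intro u
      have := hexp u
      rw [show (-k u) - (-k 0) = -(k u - k 0) by ring, abs_neg]
      exact this
    have h2 := main (fun u => -k u) hk.neg h1 (fun a b hab => by simpa using hanti hab)
    intro t
    obtain ⟨u, hu⟩ := h2 (-t)
    exact ⟨u, by simpa using congrArg Neg.neg hu⟩

lemma tk_surjA (hL : 1 ≤ L)
    (hbl : ∀ s t : ℝ, L⁻¹ * |s - t| ≤ |φ s - φ t| ∧ |φ s - φ t| ≤ L * |s - t|)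
    (hmono : Monotone φ ∨ Antitone φ) (c d : ℝ) :
    ∃ u v : ℝ, φ u + φ v = c ∧ u - v = d := by
  have hLpos : (0:ℝ) < L := lt_of_lt_of_le one_pos hL
  have hφc : Continuous φ := by
    apply LipschitzWith.continuous (K := L.toNNReal)
    apply LipschitzWith.of_dist_le_mul
    intro s t
    rw [Real.dist_eq, Real.dist_eq, Real.coe_toNNReal L (le_of_lt hLpos)]
    exact (hbl s t).2
  set k : ℝ → ℝ := fun u => φ u + φ (u - d) with hk
  have hkc : Continuous k := hφc.add (hφc.comp (continuous_id.sub continuous_const))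
  have hexp : ∀ u : ℝ, 2*|u|/L ≤ |k u - k 0| := by
    intro u
    have hsign : 0 ≤ (φ u - φ 0) * (φ (u - d) - φ (0 - d)) := by
      apply tk_sign hmono
      have : (u - 0) * ((u - d) - (0 - d)) = u^2 := by ring
      rw [this]; positivity
    have heq : k u - k 0 = (φ u - φ 0) + (φ (u - d) - φ (0 - d)) := by
      simp [hk]; ring
    rw [heq, abs_add_of_mul_nonneg hsign]
    have h1 := (hbl u 0).1
    have h2 := (hbl (u - d) (0 - d)).1
    have e1 : |u - 0| = |u| := by simp
    have e2 : |(u - d) - (0 - d)| = |u| := by rw [show (u-d)-(0-d) = u by ring]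
    rw [e1] at h1; rw [e2] at h2
    have : 2*|u|/L = L⁻¹ * |u| + L⁻¹ * |u| := by rw [div_eq_mul_inv]; ring
    linarith
  have hkm : Monotone k ∨ Antitone k := by
    rcases hmono with hm | hm
    · exact Or.inl (fun a b hab => add_le_add (hm hab) (hm (by linarith)))
    · exact Or.inr (fun a b hab => add_le_add (hm hab) (hm (by linarith)))
  obtain ⟨u, hu⟩ := tk_ivt hL k hkc hexp hkm c
  exact ⟨u, u - d, by simpa [hk] using hu, by ring⟩

lemma tk_surjB (hL : 1 ≤ L)
    (hbl : ∀ s t : ℝ, L⁻¹ * |s - t| ≤ |φ s - φ t| ∧ |φ s - φ t| ≤ L * |s - t|)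
    (hmono : Monotone φ ∨ Antitone φ) (c d : ℝ) :
    ∃ u v : ℝ, u + v = c ∧ φ u - φ v = d := by
  have hLpos : (0:ℝ) < L := lt_of_lt_of_le one_pos hL
  have hφc : Continuous φ := by
    apply LipschitzWith.continuous (K := L.toNNReal)
    apply LipschitzWith.of_dist_le_mul
    intro s t
    rw [Real.dist_eq, Real.dist_eq, Real.coe_toNNReal L (le_of_lt hLpos)]
    exact (hbl s t).2
  set k : ℝ → ℝ := fun u => φ u - φ (c - u) with hk
  have hkc : Continuous k := hφc.sub (hφc.comp (continuous_const.sub continuous_id))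
  have hexp : ∀ u : ℝ, 2*|u|/L ≤ |k u - k 0| := by
    intro u
    have hsign : 0 ≤ (φ u - φ 0) * (φ (c - 0) - φ (c - u)) := by
      apply tk_sign hmono
      have : (u - 0) * ((c - 0) - (c - u)) = u^2 := by ring
      rw [this]; positivity
    have heq : k u - k 0 = (φ u - φ 0) + (φ (c - 0) - φ (c - u)) := by
      simp [hk]; ring
    rw [heq, abs_add_of_mul_nonneg hsign]
    have h1 := (hbl u 0).1
    have h2 := (hbl (c - 0) (c - u)).1
    have e1 : |u - 0| = |u| := by simp
    have e2 : |(c - 0) - (c - u)| = |u| := by rw [show (c-0)-(c-u) = u by ring]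
    rw [e1] at h1; rw [e2] at h2
    have : 2*|u|/L = L⁻¹ * |u| + L⁻¹ * |u| := by rw [div_eq_mul_inv]; ring
    linarith
  have hkm : Monotone k ∨ Antitone k := by
    rcases hmono with hm | hm
    · exact Or.inl (fun a b hab => sub_le_sub (hm hab) (hm (by linarith)))
    · exact Or.inr (fun a b hab => sub_le_sub (hm hab) (hm (by linarith)))
  obtain ⟨u, hu⟩ := tk_ivt hL k hkc hexp hkm d
  exact ⟨u, c - u, by ring, by simpa [hk] using hu⟩

lemma tk_injA (hL : 1 ≤ L)
    (hbl : ∀ s t : ℝ, L⁻¹ * |s - t| ≤ |φ s - φ t| ∧ |φ s - φ t| ≤ L * |s - t|)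
    (hmono : Monotone φ ∨ Antitone φ) {u v u' v' : ℝ}
    (h1 : φ u + φ v = φ u' + φ v') (h2 : u - v = u' - v') : u = u' ∧ v = v' := by
  have huu : u = u' := by
    by_contra hne
    have hprod : 0 < (u - u') * (v - v') := by
      have : v - v' = u - u' := by linarith
      rw [this]
      have hz : u - u' ≠ 0 := fun h => hne (by linarith)
      exact mul_self_pos.mpr hz
    exact tk_cancel hL hbl hmono u u' v v' hprod (by linarith)
  exact ⟨huu, by rw [huu] at h2; linarith⟩

lemma tk_injB (hL : 1 ≤ L)
    (hbl : ∀ s t : ℝ, L⁻¹ * |s - t| ≤ |φ s - φ t| ∧ |φ s - φ t| ≤ L * |s - t|)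
    (hmono : Monotone φ ∨ Antitone φ) {u v u' v' : ℝ}
    (h1 : φ u - φ v = φ u' - φ v') (h2 : u + v = u' + v') : u = u' ∧ v = v' := by
  have huu : u = u' := by
    by_contra hne
    have hprod : 0 < (u - u') * (v' - v) := by
      have : v' - v = u - u' := by linarith
      rw [this]
      have hz : u - u' ≠ 0 := fun h => hne (by linarith)
      exact mul_self_pos.mpr hz
    exact tk_cancel hL hbl hmono u u' v' v hprod (by linarith)
  exact ⟨huu, by rw [huu] at h2; linarith⟩

end T3
section T4
variable {L : ℝ} {φ : ℝ → ℝ}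

noncomputable def tkFA (φ : ℝ → ℝ) : (Fin 2 → ℝ) → (Fin 2 → ℝ) :=
  fun p => ![(φ (p 0) + φ (p 1))/2, (p 0 - p 1)/2]

noncomputable def tkFB (φ : ℝ → ℝ) : (Fin 2 → ℝ) → (Fin 2 → ℝ) :=
  fun p => ![(p 0 + p 1)/2, (φ (p 0) - φ (p 1))/2]

noncomputable def tkDA (φ : ℝ → ℝ) (p : Fin 2 → ℝ) : (Fin 2 → ℝ) →L[ℝ] (Fin 2 → ℝ) :=
  LinearMap.toContinuousLinearMap
    (Matrix.toLin' !![deriv φ (p 0)/2, deriv φ (p 1)/2; 1/2, -1/2])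

noncomputable def tkDB (φ : ℝ → ℝ) (p : Fin 2 → ℝ) : (Fin 2 → ℝ) →L[ℝ] (Fin 2 → ℝ) :=
  LinearMap.toContinuousLinearMap
    (Matrix.toLin' !![1/2, 1/2; deriv φ (p 0)/2, -(deriv φ (p 1)/2)])

lemma tkDA_det (p : Fin 2 → ℝ) :
    (tkDA φ p).det = -((deriv φ (p 0) + deriv φ (p 1))/4) := by
  rw [tkDA, ContinuousLinearMap.det, LinearMap.coe_toContinuousLinearMap,
    LinearMap.det_toLin', Matrix.det_fin_two_of]
  ring

lemma tkDB_det (p : Fin 2 → ℝ) :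
    (tkDB φ p).det = -((deriv φ (p 0) + deriv φ (p 1))/4) := by
  rw [tkDB, ContinuousLinearMap.det, LinearMap.coe_toContinuousLinearMap,
    LinearMap.det_toLin', Matrix.det_fin_two_of]
  ring

lemma tk_hasfdA {p : Fin 2 → ℝ} (h0 : DifferentiableAt ℝ φ (p 0))
    (h1 : DifferentiableAt ℝ φ (p 1)) : HasFDerivAt (tkFA φ) (tkDA φ p) p := by
  apply hasFDerivAt_pi''
  intro i
  have hq0 : HasFDerivAt (fun q : Fin 2 → ℝ => q 0)
      (ContinuousLinearMap.proj 0 : (Fin 2 → ℝ) →L[ℝ] ℝ) p := by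
    exact (ContinuousLinearMap.proj 0 : (Fin 2 → ℝ) →L[ℝ] ℝ).hasFDerivAt
  have hq1 : HasFDerivAt (fun q : Fin 2 → ℝ => q 1)
      (ContinuousLinearMap.proj 1 : (Fin 2 → ℝ) →L[ℝ] ℝ) p := by
    exact (ContinuousLinearMap.proj 1 : (Fin 2 → ℝ) →L[ℝ] ℝ).hasFDerivAt
  have hp0 : HasFDerivAt (fun q : Fin 2 → ℝ => φ (q 0))
      (deriv φ (p 0) • (ContinuousLinearMap.proj 0 : (Fin 2 → ℝ) →L[ℝ] ℝ)) p :=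
    HasDerivAt.comp_hasFDerivAt p h0.hasDerivAt hq0
  have hp1 : HasFDerivAt (fun q : Fin 2 → ℝ => φ (q 1))
      (deriv φ (p 1) • (ContinuousLinearMap.proj 1 : (Fin 2 → ℝ) →L[ℝ] ℝ)) p :=
    HasDerivAt.comp_hasFDerivAt p h1.hasDerivAt hq1
  fin_cases i
  · have h := (hp0.add hp1).const_mul (2⁻¹ : ℝ)
    have heq : (fun q : Fin 2 → ℝ => (2⁻¹ : ℝ) * (φ (q 0) + φ (q 1)))
        = fun q : Fin 2 → ℝ => tkFA φ q 0 := by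
      funext q; simp [tkFA]; ring
    simp only [Pi.add_apply, Pi.sub_apply] at h
    rw [heq] at h
    refine h.congr_fderiv ?_
    apply ContinuousLinearMap.ext
    intro v
    simp [tkDA, Matrix.toLin'_apply, Matrix.mulVec, dotProduct, Fin.sum_univ_two]
    try ring
  · have h := (hq0.sub hq1).const_mul (2⁻¹ : ℝ)
    have heq : (fun q : Fin 2 → ℝ => (2⁻¹ : ℝ) * (q 0 - q 1))
        = fun q : Fin 2 → ℝ => tkFA φ q 1 := by
      funext q; simp [tkFA]; ring
    simp only [Pi.add_apply, Pi.sub_apply] at h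
    rw [heq] at h
    refine h.congr_fderiv ?_
    apply ContinuousLinearMap.ext
    intro v
    simp [tkDA, Matrix.toLin'_apply, Matrix.mulVec, dotProduct, Fin.sum_univ_two]
    try ring

lemma tk_hasfdB {p : Fin 2 → ℝ} (h0 : DifferentiableAt ℝ φ (p 0))
    (h1 : DifferentiableAt ℝ φ (p 1)) : HasFDerivAt (tkFB φ) (tkDB φ p) p := by
  apply hasFDerivAt_pi''
  intro i
  have hq0 : HasFDerivAt (fun q : Fin 2 → ℝ => q 0)
      (ContinuousLinearMap.proj 0 : (Fin 2 → ℝ) →L[ℝ] ℝ) p := by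
    exact (ContinuousLinearMap.proj 0 : (Fin 2 → ℝ) →L[ℝ] ℝ).hasFDerivAt
  have hq1 : HasFDerivAt (fun q : Fin 2 → ℝ => q 1)
      (ContinuousLinearMap.proj 1 : (Fin 2 → ℝ) →L[ℝ] ℝ) p := by
    exact (ContinuousLinearMap.proj 1 : (Fin 2 → ℝ) →L[ℝ] ℝ).hasFDerivAt
  have hp0 : HasFDerivAt (fun q : Fin 2 → ℝ => φ (q 0))
      (deriv φ (p 0) • (ContinuousLinearMap.proj 0 : (Fin 2 → ℝ) →L[ℝ] ℝ)) p :=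
    HasDerivAt.comp_hasFDerivAt p h0.hasDerivAt hq0
  have hp1 : HasFDerivAt (fun q : Fin 2 → ℝ => φ (q 1))
      (deriv φ (p 1) • (ContinuousLinearMap.proj 1 : (Fin 2 → ℝ) →L[ℝ] ℝ)) p :=
    HasDerivAt.comp_hasFDerivAt p h1.hasDerivAt hq1
  fin_cases i
  · have h := (hq0.add hq1).const_mul (2⁻¹ : ℝ)
    have heq : (fun q : Fin 2 → ℝ => (2⁻¹ : ℝ) * (q 0 + q 1))
        = fun q : Fin 2 → ℝ => tkFB φ q 0 := by
      funext q; simp [tkFB]; ring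
    simp only [Pi.add_apply, Pi.sub_apply] at h
    rw [heq] at h
    refine h.congr_fderiv ?_
    apply ContinuousLinearMap.ext
    intro v
    simp [tkDB, Matrix.toLin'_apply, Matrix.mulVec, dotProduct, Fin.sum_univ_two]
    try ring
  · have h := (hp0.sub hp1).const_mul (2⁻¹ : ℝ)
    have heq : (fun q : Fin 2 → ℝ => (2⁻¹ : ℝ) * (φ (q 0) - φ (q 1)))
        = fun q : Fin 2 → ℝ => tkFB φ q 1 := by
      funext q; simp [tkFB]; ring
    simp only [Pi.add_apply, Pi.sub_apply] at h
    rw [heq] at h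
    refine h.congr_fderiv ?_
    apply ContinuousLinearMap.ext
    intro v
    simp [tkDB, Matrix.toLin'_apply, Matrix.mulVec, dotProduct, Fin.sum_univ_two]
    try ring

end T4
section T5
variable {L : ℝ} {φ : ℝ → ℝ}

lemma tk_lipFA (hL : 1 ≤ L)
    (hbl : ∀ s t : ℝ, L⁻¹ * |s - t| ≤ |φ s - φ t| ∧ |φ s - φ t| ≤ L * |s - t|) :
    LipschitzWith (2*L).toNNReal (tkFA φ) := by
  apply LipschitzWith.of_dist_le_mul
  intro p q
  rw [Real.coe_toNNReal _ (by linarith : (0:ℝ) ≤ 2*L)]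
  rw [dist_pi_le_iff (by have := dist_nonneg (x := p) (y := q); nlinarith)]
  intro b
  have e0 : |p 0 - q 0| ≤ dist p q := by rw [← Real.dist_eq]; exact dist_le_pi_dist p q 0
  have e1 : |p 1 - q 1| ≤ dist p q := by rw [← Real.dist_eq]; exact dist_le_pi_dist p q 1
  have h0 := (hbl (p 0) (q 0)).2
  have h1 := (hbl (p 1) (q 1)).2
  have m0 := mul_le_mul_of_nonneg_left e0 (by linarith : (0:ℝ) ≤ L)
  have m1 := mul_le_mul_of_nonneg_left e1 (by linarith : (0:ℝ) ≤ L)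
  have hd := dist_nonneg (x := p) (y := q)
  fin_cases b
  · show dist (tkFA φ p 0) (tkFA φ q 0) ≤ 2*L*dist p q
    simp only [tkFA, Matrix.cons_val_zero]
    rw [Real.dist_eq]
    have key : |(φ (p 0) + φ (p 1))/2 - (φ (q 0) + φ (q 1))/2|
        ≤ (|φ (p 0) - φ (q 0)| + |φ (p 1) - φ (q 1)|)/2 := by
      rw [show (φ (p 0) + φ (p 1))/2 - (φ (q 0) + φ (q 1))/2
          = ((φ (p 0) - φ (q 0)) + (φ (p 1) - φ (q 1)))/2 by ring, abs_div, abs_two]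
      have := abs_add_le (φ (p 0) - φ (q 0)) (φ (p 1) - φ (q 1))
      linarith
    nlinarith
  · show dist (tkFA φ p 1) (tkFA φ q 1) ≤ 2*L*dist p q
    simp only [tkFA, Matrix.cons_val_one, Matrix.head_cons, Matrix.cons_val_zero]
    rw [Real.dist_eq]
    have key : |(p 0 - p 1)/2 - (q 0 - q 1)/2| ≤ (|p 0 - q 0| + |p 1 - q 1|)/2 := by
      rw [show (p 0 - p 1)/2 - (q 0 - q 1)/2 = ((p 0 - q 0) + -(p 1 - q 1))/2 by ring,
        abs_div, abs_two]
      have := abs_add_le (p 0 - q 0) (-(p 1 - q 1))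
      rw [abs_neg] at this
      linarith
    nlinarith

lemma tk_lipFB (hL : 1 ≤ L)
    (hbl : ∀ s t : ℝ, L⁻¹ * |s - t| ≤ |φ s - φ t| ∧ |φ s - φ t| ≤ L * |s - t|) :
    LipschitzWith (2*L).toNNReal (tkFB φ) := by
  apply LipschitzWith.of_dist_le_mul
  intro p q
  rw [Real.coe_toNNReal _ (by linarith : (0:ℝ) ≤ 2*L)]
  rw [dist_pi_le_iff (by have := dist_nonneg (x := p) (y := q); nlinarith)]
  intro b
  have e0 : |p 0 - q 0| ≤ dist p q := by rw [← Real.dist_eq]; exact dist_le_pi_dist p q 0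
  have e1 : |p 1 - q 1| ≤ dist p q := by rw [← Real.dist_eq]; exact dist_le_pi_dist p q 1
  have h0 := (hbl (p 0) (q 0)).2
  have h1 := (hbl (p 1) (q 1)).2
  have m0 := mul_le_mul_of_nonneg_left e0 (by linarith : (0:ℝ) ≤ L)
  have m1 := mul_le_mul_of_nonneg_left e1 (by linarith : (0:ℝ) ≤ L)
  have hd := dist_nonneg (x := p) (y := q)
  fin_cases b
  · show dist (tkFB φ p 0) (tkFB φ q 0) ≤ 2*L*dist p q
    simp only [tkFB, Matrix.cons_val_zero]
    rw [Real.dist_eq]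
    have key : |(p 0 + p 1)/2 - (q 0 + q 1)/2| ≤ (|p 0 - q 0| + |p 1 - q 1|)/2 := by
      rw [show (p 0 + p 1)/2 - (q 0 + q 1)/2 = ((p 0 - q 0) + (p 1 - q 1))/2 by ring,
        abs_div, abs_two]
      have := abs_add_le (p 0 - q 0) (p 1 - q 1)
      linarith
    nlinarith
  · show dist (tkFB φ p 1) (tkFB φ q 1) ≤ 2*L*dist p q
    simp only [tkFB, Matrix.cons_val_one, Matrix.head_cons, Matrix.cons_val_zero]
    rw [Real.dist_eq]
    have key : |(φ (p 0) - φ (p 1))/2 - (φ (q 0) - φ (q 1))/2|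
        ≤ (|φ (p 0) - φ (q 0)| + |φ (p 1) - φ (q 1)|)/2 := by
      rw [show (φ (p 0) - φ (p 1))/2 - (φ (q 0) - φ (q 1))/2
          = ((φ (p 0) - φ (q 0)) + -(φ (p 1) - φ (q 1)))/2 by ring, abs_div, abs_two]
      have := abs_add_le (φ (p 0) - φ (q 0)) (-(φ (p 1) - φ (q 1)))
      rw [abs_neg] at this
      linarith
    nlinarith

lemma tk_injFA (hL : 1 ≤ L)
    (hbl : ∀ s t : ℝ, L⁻¹ * |s - t| ≤ |φ s - φ t| ∧ |φ s - φ t| ≤ L * |s - t|)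
    (hmono : Monotone φ ∨ Antitone φ) : Function.Injective (tkFA φ) := by
  intro p q h
  have h0 := congrFun h 0
  have h1 := congrFun h 1
  simp only [tkFA, Matrix.cons_val_zero, Matrix.cons_val_one, Matrix.head_cons] at h0 h1
  obtain ⟨ha, hb⟩ := tk_injA (u := p 0) (v := p 1) (u' := q 0) (v' := q 1) hL hbl hmono
    (by linarith) (by linarith)
  funext i
  fin_cases i
  · exact ha
  · exact hb

lemma tk_injFB (hL : 1 ≤ L)
    (hbl : ∀ s t : ℝ, L⁻¹ * |s - t| ≤ |φ s - φ t| ∧ |φ s - φ t| ≤ L * |s - t|)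
    (hmono : Monotone φ ∨ Antitone φ) : Function.Injective (tkFB φ) := by
  intro p q h
  have h0 := congrFun h 0
  have h1 := congrFun h 1
  simp only [tkFB, Matrix.cons_val_zero, Matrix.cons_val_one, Matrix.head_cons] at h0 h1
  obtain ⟨ha, hb⟩ := tk_injB (u := p 0) (v := p 1) (u' := q 0) (v' := q 1) hL hbl hmono
    (by linarith) (by linarith)
  funext i
  fin_cases i
  · exact ha
  · exact hb

lemma tk_image_null (K : NNReal) (F : (Fin 2 → ℝ) → (Fin 2 → ℝ)) (hF : LipschitzWith K F)
    {s : Set (Fin 2 → ℝ)} (hs : volume s = 0) : volume (F '' s) = 0 := by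
  have hv : (volume : Measure (Fin 2 → ℝ)) = μH[((Fintype.card (Fin 2) : ℕ) : ℝ)] :=
    hausdorffMeasure_pi_real.symm
  rw [hv] at hs ⊢
  have hle := hF.hausdorffMeasure_image_le
    (by positivity : (0:ℝ) ≤ ((Fintype.card (Fin 2) : ℕ) : ℝ)) s
  rw [hs, mul_zero] at hle
  exact le_antisymm hle zero_le

lemma tk_haar (hL : 1 ≤ L)
    (hbl : ∀ s t : ℝ, L⁻¹ * |s - t| ≤ |φ s - φ t| ∧ |φ s - φ t| ≤ L * |s - t|)
    (hmono : Monotone φ ∨ Antitone φ) {s : Set (Fin 2 → ℝ)} (hs : MeasurableSet s) :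
    volume (tkFA φ '' s) = volume (tkFB φ '' s) := by
  classical
  have hLpos : (0:ℝ) < L := lt_of_lt_of_le one_pos hL
  have hlip : LipschitzWith L.toNNReal φ := by
    apply LipschitzWith.of_dist_le_mul
    intro a b
    rw [Real.dist_eq, Real.dist_eq, Real.coe_toNNReal L (le_of_lt hLpos)]
    exact (hbl a b).2
  set Dset : Set ℝ := {x | DifferentiableAt ℝ φ x} with hDset
  have hDm : MeasurableSet Dset := measurableSet_of_differentiableAt ℝ φ
  have hDc : volume Dsetᶜ = 0 := by
    have h := hlip.ae_differentiableAt (μ := volume)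
    rw [ae_iff] at h
    rw [hDset, Set.compl_setOf]
    exact h
  set G : Set (Fin 2 → ℝ) :=
    ((fun p : Fin 2 → ℝ => p 0) ⁻¹' Dset) ∩ ((fun p : Fin 2 → ℝ => p 1) ⁻¹' Dset) with hG
  have hGm : MeasurableSet G :=
    ((measurable_pi_apply 0) hDm).inter ((measurable_pi_apply 1) hDm)
  have hGc : volume Gᶜ = 0 := by
    have hGeq : Gᶜ = ((fun p : Fin 2 → ℝ => p 0) ⁻¹' Dsetᶜ)
        ∪ ((fun p : Fin 2 → ℝ => p 1) ⁻¹' Dsetᶜ) := by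
      rw [hG, compl_inter]
      rfl
    rw [hGeq]
    apply le_antisymm _ zero_le
    refine le_trans (measure_union_le _ _) ?_
    have hpre0 : (fun p : Fin 2 → ℝ => p 0) ⁻¹' Dsetᶜ
        = (MeasurableEquiv.finTwoArrow : (Fin 2 → ℝ) ≃ᵐ ℝ × ℝ) ⁻¹' (Dsetᶜ ×ˢ univ) := by
      ext p
      simp [MeasurableEquiv.finTwoArrow]
    have hpre1 : (fun p : Fin 2 → ℝ => p 1) ⁻¹' Dsetᶜ
        = (MeasurableEquiv.finTwoArrow : (Fin 2 → ℝ) ≃ᵐ ℝ × ℝ) ⁻¹' (univ ×ˢ Dsetᶜ) := by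
      ext p
      simp [MeasurableEquiv.finTwoArrow]
    rw [hpre0, hpre1,
      (volume_preserving_finTwoArrow ℝ).measure_preimage_equiv,
      (volume_preserving_finTwoArrow ℝ).measure_preimage_equiv]
    rw [Measure.volume_eq_prod, Measure.prod_prod, Measure.prod_prod, hDc, zero_mul, mul_zero]
    simp
  have key : ∀ (K : NNReal) (F : (Fin 2 → ℝ) → (Fin 2 → ℝ))
      (DF : (Fin 2 → ℝ) → ((Fin 2 → ℝ) →L[ℝ] (Fin 2 → ℝ))),
      (∀ p : Fin 2 → ℝ, p ∈ G → HasFDerivAt F (DF p) p) →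
      Function.Injective F → LipschitzWith K F →
      (∀ p, (DF p).det = -((deriv φ (p 0) + deriv φ (p 1))/4)) →
      volume (F '' s) = ∫⁻ p in s ∩ G, ENNReal.ofReal |(deriv φ (p 0) + deriv φ (p 1))/4| := by
    intro K F DF hFd hFinj hFlip hdet
    have hsplit : F '' s = F '' (s ∩ G) ∪ F '' (s \ G) := by
      rw [← image_union, inter_union_diff]
    have hdiffnull : volume (s \ G) = 0 := by
      apply measure_mono_null _ hGc
      intro p hp
      exact hp.2
    have hnull : volume (F '' (s \ G)) = 0 := tk_image_null K F hFlip hdiffnull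
    have hmain : volume (F '' s) = volume (F '' (s ∩ G)) := by
      apply le_antisymm
      · rw [hsplit]
        refine le_trans (measure_union_le _ _) ?_
        rw [hnull, add_zero]
      · exact measure_mono (image_mono inter_subset_left)
    rw [hmain]
    rw [← lintegral_abs_det_fderiv_eq_addHaar_image volume (hs.inter hGm)
      (fun x hx => (hFd x hx.2).hasFDerivWithinAt) (fun x _ y _ h => hFinj h)]
    apply lintegral_congr
    intro p
    rw [hdet, abs_neg]
  rw [key _ _ _ (fun p hp => tk_hasfdA hp.1 hp.2) (tk_injFA hL hbl hmono) (tk_lipFA hL hbl)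
      tkDA_det,
    key _ _ _ (fun p hp => tk_hasfdB hp.1 hp.2) (tk_injFB hL hbl hmono) (tk_lipFB hL hbl)
      tkDB_det]

end T5

/-- Tukia-type plane extension: given an `L`-biLipschitz monotone homeomorphism `φ` of `ℝ`
with inverse `ψ`, the map `Ψ(x,y) = (x̃(x,y), ỹ(x̃(x,y),y))` built from
`x(x̃,y) = (φ(x̃+y)+φ(x̃−y))/2`, `ỹ(x̃,y) = (φ(x̃+y)−φ(x̃−y))/2` is a `2L³`-biLipschitz,
area-preserving homeomorphism of the plane with `Ψ(x,0) = (ψ(x),0)`. -/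
theorem stmt6 (L : ℝ) (hL : 1 ≤ L) (φ ψ : ℝ → ℝ)
    (hbl : ∀ s t : ℝ, L⁻¹ * |s - t| ≤ |φ s - φ t| ∧ |φ s - φ t| ≤ L * |s - t|)
    (hmono : Monotone φ ∨ Antitone φ)
    (hinv₁ : Function.LeftInverse ψ φ) (hinv₂ : Function.RightInverse ψ φ)
    (xt : ℝ → ℝ → ℝ)
    (hxt : ∀ x y : ℝ, (φ (xt x y + y) + φ (xt x y - y)) / 2 = x)
    (Ψ : EuclideanSpace ℝ (Fin 2) → EuclideanSpace ℝ (Fin 2))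
    (hΨ : ∀ p : EuclideanSpace ℝ (Fin 2),
      Ψ p = (WithLp.equiv 2 (Fin 2 → ℝ)).symm
        ![xt (p 0) (p 1), (φ (xt (p 0) (p 1) + p 1) - φ (xt (p 0) (p 1) - p 1)) / 2]) :
    Function.Bijective Ψ ∧ Continuous Ψ ∧
    (∀ p q : EuclideanSpace ℝ (Fin 2),
      dist (Ψ p) (Ψ q) ≤ 2 * L ^ 3 * dist p q ∧
      dist p q ≤ 2 * L ^ 3 * dist (Ψ p) (Ψ q)) ∧
    (∀ A : Set (EuclideanSpace ℝ (Fin 2)), MeasurableSet A →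
      volume (Ψ '' A) = volume A) ∧
    (∀ x : ℝ, Ψ ((WithLp.equiv 2 (Fin 2 → ℝ)).symm ![x, 0]) =
      (WithLp.equiv 2 (Fin 2 → ℝ)).symm ![ψ x, 0]) := by
  have hLpos : (0:ℝ) < L := lt_of_lt_of_le one_pos hL
  have hc0 : ∀ a b : ℝ, ((WithLp.equiv 2 (Fin 2 → ℝ)).symm ![a, b]) 0 = a := fun a b => rfl
  have hc1 : ∀ a b : ℝ, ((WithLp.equiv 2 (Fin 2 → ℝ)).symm ![a, b]) 1 = b := fun a b => rfl
  have hpoint : ∀ p : EuclideanSpace ℝ (Fin 2),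
      (WithLp.equiv 2 (Fin 2 → ℝ)).symm ![p 0, p 1] = p := by
    intro p; ext i; fin_cases i <;> rfl
  set Am : EuclideanSpace ℝ (Fin 2) → EuclideanSpace ℝ (Fin 2) :=
    fun p => (WithLp.equiv 2 (Fin 2 → ℝ)).symm ![(φ (p 0) + φ (p 1))/2, (p 0 - p 1)/2] with hAm
  set Bm : EuclideanSpace ℝ (Fin 2) → EuclideanSpace ℝ (Fin 2) :=
    fun p => (WithLp.equiv 2 (Fin 2 → ℝ)).symm ![(p 0 + p 1)/2, (φ (p 0) - φ (p 1))/2] with hBm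
  have hAm0 : ∀ p, Am p 0 = (φ (p 0) + φ (p 1))/2 := by intro p; rw [hAm]; rfl
  have hAm1 : ∀ p, Am p 1 = (p 0 - p 1)/2 := by intro p; rw [hAm]; rfl
  have hBm0 : ∀ p, Bm p 0 = (p 0 + p 1)/2 := by intro p; rw [hBm]; rfl
  have hBm1 : ∀ p, Bm p 1 = (φ (p 0) - φ (p 1))/2 := by intro p; rw [hBm]; rfl
  -- the key conjugation identity
  have hxt_eq : ∀ u v : ℝ, xt ((φ u + φ v)/2) ((u - v)/2) = (u + v)/2 := by
    intro u v
    by_contra hne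
    have h1 := hxt ((φ u + φ v)/2) ((u - v)/2)
    have hz : xt ((φ u + φ v)/2) ((u - v)/2) - (u + v)/2 ≠ 0 := fun h => hne (by linarith)
    have hzz := mul_self_pos.mpr hz
    have hprod : 0 < ((xt ((φ u + φ v)/2) ((u - v)/2) + (u - v)/2) - u) *
        ((xt ((φ u + φ v)/2) ((u - v)/2) - (u - v)/2) - v) := by nlinarith
    exact tk_cancel hL hbl hmono _ u _ v hprod (by linarith)
  have hΨA : ∀ p, Ψ (Am p) = Bm p := by
    intro p
    rw [hΨ]
    have e0 : (Am p) 0 = (φ (p 0) + φ (p 1))/2 := hAm0 p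
    have e1 : (Am p) 1 = (p 0 - p 1)/2 := hAm1 p
    rw [e0, e1, hxt_eq (p 0) (p 1)]
    have a1 : (p 0 + p 1)/2 + (p 0 - p 1)/2 = p 0 := by ring
    have a2 : (p 0 + p 1)/2 - (p 0 - p 1)/2 = p 1 := by ring
    rw [a1, a2, hBm]
  have hAsurj : Function.Surjective Am := by
    intro w
    obtain ⟨u, v, h1, h2⟩ := tk_surjA hL hbl hmono (2 * (w 0)) (2 * (w 1))
    refine ⟨(WithLp.equiv 2 (Fin 2 → ℝ)).symm ![u, v], ?_⟩
    rw [hAm]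
    simp only [hc0, hc1]
    rw [show (φ u + φ v)/2 = w 0 by linarith, show (u - v)/2 = w 1 by linarith, hpoint]
  have hBsurj : Function.Surjective Bm := by
    intro w
    obtain ⟨u, v, h1, h2⟩ := tk_surjB hL hbl hmono (2 * (w 0)) (2 * (w 1))
    refine ⟨(WithLp.equiv 2 (Fin 2 → ℝ)).symm ![u, v], ?_⟩
    rw [hBm]
    simp only [hc0, hc1]
    rw [show (u + v)/2 = w 0 by linarith, show (φ u - φ v)/2 = w 1 by linarith, hpoint]
  have hAinj : Function.Injective Am := by
    intro p q h
    have h0 := congrArg (fun v : EuclideanSpace ℝ (Fin 2) => v 0) h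
    have h1 := congrArg (fun v : EuclideanSpace ℝ (Fin 2) => v 1) h
    simp only [] at h0 h1
    rw [hAm0 p, hAm0 q] at h0
    rw [hAm1 p, hAm1 q] at h1
    obtain ⟨e1, e2⟩ := tk_injA (u := p 0) (v := p 1) (u' := q 0) (v' := q 1) hL hbl hmono
      (by linarith) (by linarith)
    rw [← hpoint p, ← hpoint q, e1, e2]
  have hBinj : Function.Injective Bm := by
    intro p q h
    have h0 := congrArg (fun v : EuclideanSpace ℝ (Fin 2) => v 0) h
    have h1 := congrArg (fun v : EuclideanSpace ℝ (Fin 2) => v 1) h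
    simp only [] at h0 h1
    rw [hBm0 p, hBm0 q] at h0
    rw [hBm1 p, hBm1 q] at h1
    obtain ⟨e1, e2⟩ := tk_injB (u := p 0) (v := p 1) (u' := q 0) (v' := q 1) hL hbl hmono
      (by linarith) (by linarith)
    rw [← hpoint p, ← hpoint q, e1, e2]
  have hΨbij : Function.Bijective Ψ := by
    constructor
    · intro p q h
      obtain ⟨a, rfl⟩ := hAsurj p
      obtain ⟨b, rfl⟩ := hAsurj q
      rw [hΨA, hΨA] at h
      exact congrArg Am (hBinj h)
    · intro w
      obtain ⟨a, rfl⟩ := hBsurj w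
      exact ⟨Am a, hΨA a⟩
  -- distance estimates
  have hdsq : ∀ p q : EuclideanSpace ℝ (Fin 2),
      dist p q = Real.sqrt ((p 0 - q 0)^2 + (p 1 - q 1)^2) := by
    intro p q
    rw [EuclideanSpace.dist_eq, Fin.sum_univ_two, Real.dist_eq, Real.dist_eq, sq_abs, sq_abs]
  have core : ∀ u v u' v' : ℝ,
      (((u + v)/2 - (u' + v')/2)^2 + ((φ u - φ v)/2 - (φ u' - φ v')/2)^2
        ≤ (2*L^3)^2 * (((φ u + φ v)/2 - (φ u' + φ v')/2)^2 + ((u - v)/2 - (u' - v')/2)^2)) ∧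
      (((φ u + φ v)/2 - (φ u' + φ v')/2)^2 + ((u - v)/2 - (u' - v')/2)^2
        ≤ (2*L^3)^2 * (((u + v)/2 - (u' + v')/2)^2 + ((φ u - φ v)/2 - (φ u' - φ v')/2)^2)) := by
    intro u v u' v'
    have h1L : (1:ℝ) ≤ L^2 := by nlinarith
    have hsq_u := tk_sq_ub hL hbl u u'
    have hsq_v := tk_sq_ub hL hbl v v'
    have hlb_u := tk_sq_lb hL hbl u u'
    have hlb_v := tk_sq_lb hL hbl v v'
    have hsplit : (0 ≤ (u-u')*(v-v') ∧ 0 ≤ (φ u - φ u')*(φ v - φ v')) ∨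
        ((u-u')*(v-v') ≤ 0 ∧ (φ u - φ u')*(φ v - φ v') ≤ 0) := by
      rcases le_total 0 ((u-u')*(v-v')) with h | h
      · exact Or.inl ⟨h, tk_sign hmono u u' v v' h⟩
      · refine Or.inr ⟨h, ?_⟩
        have h2 := tk_sign hmono u u' v' v (by nlinarith)
        nlinarith
    have hsplit2 : (0 ≤ (u-u')*(-(v-v')) ∧ 0 ≤ (φ u - φ u')*(-(φ v - φ v'))) ∨
        ((u-u')*(-(v-v')) ≤ 0 ∧ (φ u - φ u')*(-(φ v - φ v')) ≤ 0) := by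
      rcases hsplit with ⟨ha, hb⟩ | ⟨ha, hb⟩
      · right; constructor <;> nlinarith
      · left; constructor <;> nlinarith
    have lb1 := quad_lb hL (u-u') (v-v') (φ u - φ u') (φ v - φ v') hlb_u hlb_v hsplit
    have lb2 := quad_lb hL (u-u') (-(v-v')) (φ u - φ u') (-(φ v - φ v')) hlb_u
      (by nlinarith) hsplit2
    have ub1 := quad_ub hL (u-u') (v-v') (φ u - φ u') (φ v - φ v') hsq_u hsq_v
    have ub2 := quad_ub hL (u-u') (-(v-v')) (φ u - φ u') (-(φ v - φ v')) hsq_u (by nlinarith)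
    have hP1 : (0:ℝ) ≤ ((φ u - φ u') + (φ v - φ v'))^2 + ((u-u') - (v-v'))^2 := by positivity
    have hP2 : (0:ℝ) ≤ ((φ u - φ u') + -(φ v - φ v'))^2 + ((u-u') - -(v-v'))^2 := by positivity
    have hLL : L^2*L^2 ≤ L^2*(L^2*L^2) := by nlinarith [sq_nonneg L, sq_nonneg (L*L)]
    constructor
    · have m1 := mul_le_mul_of_nonneg_left lb1 (sq_nonneg L)
      have m2 := mul_le_mul_of_nonneg_right hLL hP1
      nlinarith [ub2, m1, m2]
    · have m1 := mul_le_mul_of_nonneg_left lb2 (sq_nonneg L)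
      have m2 := mul_le_mul_of_nonneg_right hLL hP2
      nlinarith [ub1, m1, m2]
  have hdistAB : ∀ a b : EuclideanSpace ℝ (Fin 2),
      dist (Bm a) (Bm b) ≤ 2*L^3*dist (Am a) (Am b) ∧
      dist (Am a) (Am b) ≤ 2*L^3*dist (Bm a) (Bm b) := by
    intro a b
    have hA : dist (Am a) (Am b) = Real.sqrt
        (((φ (a 0) + φ (a 1))/2 - (φ (b 0) + φ (b 1))/2)^2
          + ((a 0 - a 1)/2 - (b 0 - b 1)/2)^2) := by
      rw [hdsq, hAm0, hAm0, hAm1, hAm1]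
    have hB : dist (Bm a) (Bm b) = Real.sqrt
        (((a 0 + a 1)/2 - (b 0 + b 1)/2)^2
          + ((φ (a 0) - φ (a 1))/2 - (φ (b 0) - φ (b 1))/2)^2) := by
      rw [hdsq, hBm0, hBm0, hBm1, hBm1]
    obtain ⟨c1, c2⟩ := core (a 0) (a 1) (b 0) (b 1)
    constructor
    · rw [hA, hB]
      have h1 := Real.sqrt_le_sqrt c1
      rwa [Real.sqrt_mul (sq_nonneg _), Real.sqrt_sq (by positivity : (0:ℝ) ≤ 2*L^3)] at h1
    · rw [hA, hB]
      have h1 := Real.sqrt_le_sqrt c2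
      rwa [Real.sqrt_mul (sq_nonneg _), Real.sqrt_sq (by positivity : (0:ℝ) ≤ 2*L^3)] at h1
  have hconc3 : ∀ p q : EuclideanSpace ℝ (Fin 2),
      dist (Ψ p) (Ψ q) ≤ 2 * L ^ 3 * dist p q ∧
      dist p q ≤ 2 * L ^ 3 * dist (Ψ p) (Ψ q) := by
    intro p q
    obtain ⟨a, rfl⟩ := hAsurj p
    obtain ⟨b, rfl⟩ := hAsurj q
    rw [hΨA, hΨA]
    exact ⟨(hdistAB a b).1, (hdistAB a b).2⟩
  have hcont : Continuous Ψ := by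
    apply LipschitzWith.continuous (K := (2*L^3).toNNReal)
    apply LipschitzWith.of_dist_le_mul
    intro p q
    rw [Real.coe_toNNReal _ (by positivity)]
    exact (hconc3 p q).1
  -- measure preservation
  have hmeas : ∀ A : Set (EuclideanSpace ℝ (Fin 2)), MeasurableSet A →
      volume (Ψ '' A) = volume A := by
    intro E hE
    set me := (MeasurableEquiv.toLp 2 (Fin 2 → ℝ)).symm with hme_def
    have hmp := EuclideanSpace.volume_preserving_symm_measurableEquiv_toLp (Fin 2)
    have hAmc : ∀ p, Am p = me.symm (tkFA φ (me p)) := by intro p; rw [hAm]; rfl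
    have hBmc : ∀ p, Bm p = me.symm (tkFB φ (me p)) := by intro p; rw [hBm]; rfl
    have hAmmeas : Measurable Am := by
      have hcA : Continuous (tkFA φ) := (tk_lipFA hL hbl).continuous
      have : Measurable fun p : EuclideanSpace ℝ (Fin 2) => me.symm (tkFA φ (me p)) :=
        me.symm.measurable.comp (hcA.measurable.comp me.measurable)
      have heq : Am = fun p : EuclideanSpace ℝ (Fin 2) => me.symm (tkFA φ (me p)) :=
        funext hAmc
      rw [heq]
      exact this
    set s : Set (EuclideanSpace ℝ (Fin 2)) := Am ⁻¹' E with hs_def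
    have hsm : MeasurableSet s := hAmmeas hE
    have hms : MeasurableSet (me '' s) := (MeasurableEquiv.measurableSet_image me).2 hsm
    have hEeq : Am '' s = E := Set.image_preimage_eq E hAsurj
    have hΨE : Ψ '' E = Bm '' s := by
      rw [← hEeq, Set.image_image]
      exact Set.image_congr fun a _ => hΨA a
    have htrans : ∀ (F : (Fin 2 → ℝ) → (Fin 2 → ℝ))
        (Cm : EuclideanSpace ℝ (Fin 2) → EuclideanSpace ℝ (Fin 2)),
        (∀ p, Cm p = me.symm (F (me p))) →
        volume (Cm '' s) = volume (F '' (me '' s)) := by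
      intro F Cm hc
      have himg : Cm '' s = me.symm '' (F '' (me '' s)) := by
        rw [Set.image_image, Set.image_image]
        exact Set.image_congr fun a _ => hc a
      rw [himg, MeasurableEquiv.image_symm]
      exact hmp.measure_preimage_equiv _
    rw [hΨE, htrans (tkFB φ) Bm hBmc, ← tk_haar hL hbl hmono hms,
      ← htrans (tkFA φ) Am hAmc, hEeq]
  -- boundary values
  have hconc5 : ∀ x : ℝ, Ψ ((WithLp.equiv 2 (Fin 2 → ℝ)).symm ![x, 0]) =
      (WithLp.equiv 2 (Fin 2 → ℝ)).symm ![ψ x, 0] := by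
    intro x
    have hx0 : φ (xt x 0) = x := by
      have h := hxt x 0
      rw [add_zero, sub_zero] at h
      linarith
    have hxψ : xt x 0 = ψ x := by
      have h := hinv₁ (xt x 0)
      rw [hx0] at h
      exact h.symm
    rw [hΨ]
    rw [hc0, hc1, hxψ, add_zero, sub_zero, sub_self, zero_div]
  exact ⟨hΨbij, hcont, hconc3, hmeas, hconc5⟩
end

section
/- Let φ be a piecewise linear orientation-preserving homeomorphism of [0,1] with φ(0)=0, φ(1)=1 and 1/C² ≤ φ'(x) ≤ C² almost everywhere. Then φ can be written as a composition of at most m(C) piecewise linear 3/2-biLipschitz orientation-preserving self-homeomorphisms of [0,1], where m(C) depends only on C (one can take m(C) of order log_{7/6}(C²)). -/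
open Set

/-- `f` is piecewise linear on `[0,1]`. -/
def PLOn (f : ℝ → ℝ) : Prop :=
  ∃ (n : ℕ) (t : Fin (n + 1) → ℝ), t 0 = 0 ∧ t (Fin.last n) = 1 ∧ Monotone t ∧
    ∀ i : Fin n, ∃ c d : ℝ, ∀ x ∈ Set.Icc (t i.castSucc) (t i.succ), f x = c * x + d

namespace Stmt9


noncomputable def Phi (φ : ℝ → ℝ) (x : ℝ) : ℝ := if x ∈ Set.Icc (0:ℝ) 1 then φ x else x

noncomputable def psi (φ : ℝ → ℝ) (t x : ℝ) : ℝ := (1 - t) * x + t * Phi φ x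

lemma Phi_eq {φ : ℝ → ℝ} {x : ℝ} (hx : x ∈ Set.Icc (0:ℝ) 1) : Phi φ x = φ x := if_pos hx

variable {φ : ℝ → ℝ} {C : ℝ}

/-- abbreviation for the main hypothesis -/
def Hyp (φ : ℝ → ℝ) (C : ℝ) : Prop :=
  ∀ x ∈ Set.Icc (0:ℝ) 1, ∀ y ∈ Set.Icc (0:ℝ) 1, x ≤ y →
    (y - x) / C ^ 2 ≤ φ y - φ x ∧ φ y - φ x ≤ C ^ 2 * (y - x)

lemma phi_lt (hC : 1 ≤ C) (H : Hyp φ C) {x y : ℝ} (hx : x ∈ Icc (0:ℝ) 1)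
    (hy : y ∈ Icc (0:ℝ) 1) (hxy : x < y) : φ x < φ y := by
  have h := (H x hx y hy hxy.le).1
  have hc : (0:ℝ) < C ^ 2 := by positivity
  have : 0 < (y - x) / C ^ 2 := div_pos (by linarith) hc
  linarith

lemma phi_mem (h0 : φ 0 = 0) (h1 : φ 1 = 1) (H : Hyp φ C) {x : ℝ}
    (hx : x ∈ Icc (0:ℝ) 1) : φ x ∈ Icc (0:ℝ) 1 := by
  have hc : (0:ℝ) ≤ C ^ 2 := by positivity
  have h0' := (H 0 ⟨le_refl 0, zero_le_one⟩ x hx hx.1).1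
  have h1' := (H x hx 1 ⟨hx.1.trans hx.2, le_refl 1⟩ hx.2).1
  have d0 : 0 ≤ (x - 0) / C ^ 2 := div_nonneg (by linarith [hx.1]) hc
  have d1 : 0 ≤ (1 - x) / C ^ 2 := div_nonneg (by linarith [hx.2]) hc
  constructor <;> [linarith [h0', h0]; linarith [h1', h1]]

lemma Phi_strictMono (hC : 1 ≤ C) (h0 : φ 0 = 0) (h1 : φ 1 = 1) (H : Hyp φ C) :
    StrictMono (Phi φ) := by
  intro x y hxy
  unfold Phi
  by_cases hx : x ∈ Icc (0:ℝ) 1 <;> by_cases hy : y ∈ Icc (0:ℝ) 1 <;>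
    simp only [hx, hy, if_pos, if_neg, if_true, if_false]
  · exact phi_lt hC H hx hy hxy
  · have hy1 : 1 < y := by
      simp only [mem_Icc, not_and, not_le] at hy
      exact hy (le_trans hx.1 hxy.le)
    have := (phi_mem h0 h1 H hx).2
    linarith
  · have hx0 : x < 0 := by
      simp only [mem_Icc, not_and, not_le] at hx
      by_contra hcon
      push_neg at hcon
      exact absurd (hx hcon) (not_lt.2 (hxy.le.trans hy.2))
    have := (phi_mem h0 h1 H hy).1
    linarith
  · exact hxy

lemma psi_strictMono (hC : 1 ≤ C) (h0 : φ 0 = 0) (h1 : φ 1 = 1) (H : Hyp φ C)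
    {t : ℝ} (ht0 : 0 ≤ t) (ht1 : t ≤ 1) : StrictMono (psi φ t) := by
  intro x y hxy
  have h := Phi_strictMono hC h0 h1 H hxy
  unfold psi
  rcases lt_or_ge t 1 with h' | h'
  · nlinarith [mul_nonneg ht0 (sub_nonneg.2 h.le)]
  · have : t = 1 := le_antisymm ht1 h'
    subst this
    simpa using h

lemma psi_zero (h0 : φ 0 = 0) (t : ℝ) : psi φ t 0 = 0 := by
  have : Phi φ 0 = φ 0 := Phi_eq ⟨le_refl 0, zero_le_one⟩
  simp [psi, this, h0]

lemma psi_one (h1 : φ 1 = 1) (t : ℝ) : psi φ t 1 = 1 := by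
  have : Phi φ 1 = φ 1 := Phi_eq ⟨zero_le_one, le_refl 1⟩
  simp [psi, this, h1]

lemma psi_contOn (hC : 1 ≤ C) (H : Hyp φ C) (t : ℝ) :
    ContinuousOn (psi φ t) (Icc 0 1) := by
  have hc : (0:ℝ) ≤ C ^ 2 := by positivity
  have key : ∀ x ∈ Icc (0:ℝ) 1, ∀ y ∈ Icc (0:ℝ) 1, dist (φ x) (φ y) ≤ C ^ 2 * dist x y := by
    intro x hx y hy
    rw [Real.dist_eq, Real.dist_eq]
    rcases le_total x y with h | h
    · have h2 := H x hx y hy h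
      have hd : 0 ≤ (y - x) / C ^ 2 := div_nonneg (by linarith) hc
      rw [abs_of_nonpos (by linarith [h2.1]), abs_of_nonpos (by linarith)]
      linarith [h2.2]
    · have h2 := H y hy x hx h
      have hd : 0 ≤ (x - y) / C ^ 2 := div_nonneg (by linarith) hc
      rw [abs_of_nonneg (by linarith [h2.1]), abs_of_nonneg (by linarith)]
      linarith [h2.2]
  have hlip : LipschitzOnWith (Real.toNNReal (C ^ 2)) φ (Icc 0 1) := by
    apply LipschitzOnWith.of_dist_le_mul
    intro x hx y hy
    rw [Real.coe_toNNReal _ hc]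
    exact key x hx y hy
  have hφc : ContinuousOn φ (Icc 0 1) := hlip.continuousOn
  have hΦc : ContinuousOn (Phi φ) (Icc 0 1) := hφc.congr fun x hx => Phi_eq hx
  exact (continuousOn_const.mul continuousOn_id).add (continuousOn_const.mul hΦc)

lemma psi_surj (hC : 1 ≤ C) (h0 : φ 0 = 0) (h1 : φ 1 = 1) (H : Hyp φ C)
    (t : ℝ) {x : ℝ} (hx : x ∈ Icc (0:ℝ) 1) :
    ∃ u ∈ Icc (0:ℝ) 1, psi φ t u = x := by
  have hsub := intermediate_value_Icc (zero_le_one (α := ℝ)) (psi_contOn hC H t)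
  rw [psi_zero h0, psi_one h1] at hsub
  obtain ⟨u, hu, hux⟩ := hsub hx
  exact ⟨u, hu, hux⟩



lemma core (Csq Δ D b δ : ℝ) (hΔ : 0 ≤ Δ) (hD1 : Δ / Csq ≤ D) (hD2 : D ≤ Csq * Δ)
    (hCsq : 1 ≤ Csq) (hb0 : 0 ≤ b) (hb1 : b ≤ 1) (hab1 : b + δ ≤ 1) (hδ : 0 < δ)
    (hsmall : δ * (Csq - 1) ≤ 1 / 3) :
    (2/3) * (Δ + b * (D - Δ)) ≤ Δ + (b + δ) * (D - Δ) ∧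
      Δ + (b + δ) * (D - Δ) ≤ (3/2) * (Δ + b * (D - Δ)) := by
  have hc0 : (0:ℝ) < Csq := by linarith
  have hDC : Δ ≤ Csq * D := by
    rw [div_le_iff₀ hc0] at hD1; linarith
  have hD0 : 0 ≤ D := le_trans (div_nonneg hΔ hc0.le) hD1
  rcases le_total D Δ with hcase | hcase
  · constructor
    · -- need Δ/3 - (δ + b/3)(Δ - D) ≥ 0 using δ(Δ-D) ≤ δ(Csq-1)D ≤ D/3
      have h1 : Δ - D ≤ (Csq - 1) * D := by nlinarith
      have h2 : δ * (Δ - D) ≤ δ * ((Csq - 1) * D) := by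
        apply mul_le_mul_of_nonneg_left h1 hδ.le
      have h3 : δ * ((Csq - 1) * D) ≤ (1/3) * D := by nlinarith
      nlinarith [mul_le_mul_of_nonneg_left (sub_nonneg.2 hcase) (by linarith : (0:ℝ) ≤ b)]
    · nlinarith [mul_nonneg hb0 (sub_nonneg.2 hcase), mul_le_mul_of_nonneg_left hD0 hb0]
  · constructor
    · nlinarith [mul_nonneg (by linarith : (0:ℝ) ≤ δ + b/3) (sub_nonneg.2 hcase)]
    · have h1 : D - Δ ≤ (Csq - 1) * Δ := by nlinarith
      have h2 : δ * (D - Δ) ≤ δ * ((Csq - 1) * Δ) := mul_le_mul_of_nonneg_left h1 hδ.le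
      have h3 : δ * ((Csq - 1) * Δ) ≤ (1/3) * Δ := by nlinarith
      nlinarith [mul_le_mul_of_nonneg_left (sub_nonneg.2 hcase) (by linarith : (0:ℝ) ≤ b/2)]

lemma foldr_eval (m : ℕ) (F : ℕ → ℝ → ℝ) (hinj : ∀ k, k ≤ m → Function.Injective (F k))
    (x : ℝ) (hx : F m x = x) :
    (List.ofFn (fun i : Fin m => F i ∘ Function.invFun (F (i + 1)))).foldr (· ∘ ·) id x
      = F 0 x := by
  induction m generalizing F x with
  | zero => simpa using hx.symm
  | succ m ih =>
    have tail := ih (fun k => F (k + 1)) (fun k hk => hinj (k + 1) (by omega)) x hx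
    rw [List.ofFn_succ]
    simp only [List.foldr_cons, Function.comp_apply, Fin.val_succ, Fin.val_zero]
    rw [tail, Function.leftInverse_invFun (hinj 1 (by omega)) x]


lemma PLOn_comp (hC : 1 ≤ C) (h0 : φ 0 = 0) (h1 : φ 1 = 1) (H : Hyp φ C)
    (hφ : PLOn φ) {a b : ℝ} (ha0 : 0 ≤ a) (ha1 : a ≤ 1) (hb0 : 0 ≤ b) (hb1 : b ≤ 1) :
    PLOn (psi φ a ∘ Function.invFun (psi φ b)) := by
  obtain ⟨N, t, ht0, htN, htm, hp⟩ := hφ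
  have smb := psi_strictMono hC h0 h1 H hb0 hb1
  have inj : Function.Injective (psi φ b) := smb.injective
  refine ⟨N, fun j => psi φ b (t j), by show psi φ b (t 0) = 0; rw [ht0]; exact psi_zero h0 b,
    by show psi φ b (t (Fin.last N)) = 1; rw [htN]; exact psi_one h1 b,
    fun i j hij => smb.monotone (htm hij), ?_⟩
  intro j
  obtain ⟨c, d, hcd⟩ := hp j
  set T₀ := t j.castSucc with hT0def
  set T₁ := t j.succ with hT1def
  have hT01 : T₀ ≤ T₁ := htm (j.castSucc_lt_succ).le
  have hT0mem : T₀ ∈ Icc (0:ℝ) 1 :=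
    ⟨by rw [← ht0]; exact htm (Fin.zero_le _), by rw [← htN]; exact htm (Fin.le_last _)⟩
  have hT1mem : T₁ ∈ Icc (0:ℝ) 1 :=
    ⟨by rw [← ht0]; exact htm (Fin.zero_le _), by rw [← htN]; exact htm (Fin.le_last _)⟩
  have hsub : Icc T₀ T₁ ⊆ Icc (0:ℝ) 1 := fun z hz =>
    ⟨le_trans hT0mem.1 hz.1, le_trans hz.2 hT1mem.2⟩
  rcases eq_or_lt_of_le hT01 with heq | hlt
  · refine ⟨0, psi φ a T₀, fun x hx => ?_⟩
    have hx' : x = psi φ b T₀ := le_antisymm (by rw [heq]; exact hx.2) hx.1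
    rw [hx', Function.comp_apply, Function.leftInverse_invFun inj T₀]
    ring
  · have haff : ∀ z ∈ Icc T₀ T₁, ∀ s : ℝ, psi φ s z = ((1 - s) + s * c) * z + s * d := by
      intro z hz s
      rw [psi, Phi_eq (hsub hz), hcd z hz]; ring
    set cb := (1 - b) + b * c with hcbdef
    have hcbpos : 0 < cb := by
      have h2 : psi φ b T₀ < psi φ b T₁ := smb hlt
      rw [haff T₀ ⟨le_refl _, hT01⟩ b, haff T₁ ⟨hT01, le_refl _⟩ b] at h2
      nlinarith
    refine ⟨((1 - a) + a * c) / cb, ((1 - a) + a * c) * (-(b * d)) / cb + a * d, ?_⟩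
    intro x hx
    set y := (x - b * d) / cb with hydef
    have hxlb : psi φ b T₀ ≤ x := hx.1
    have hxub : x ≤ psi φ b T₁ := hx.2
    rw [haff T₀ ⟨le_refl _, hT01⟩ b] at hxlb
    rw [haff T₁ ⟨hT01, le_refl _⟩ b] at hxub
    have hy0 : T₀ ≤ y := by rw [hydef, le_div_iff₀ hcbpos, hcbdef]; nlinarith
    have hy1 : y ≤ T₁ := by rw [hydef, div_le_iff₀ hcbpos, hcbdef]; nlinarith
    have hψy : psi φ b y = x := by
      rw [haff y ⟨hy0, hy1⟩ b, hydef]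
      field_simp
      rw [hcbdef]; ring
    rw [Function.comp_apply, ← hψy, Function.leftInverse_invFun inj y,
      haff y ⟨hy0, hy1⟩ a, hψy, hydef]
    field_simp
    ring


end Stmt9

open Stmt9

/-- Any piecewise linear orientation-preserving self-homeomorphism `φ` of `[0,1]` with
`1/C² ≤ φ' ≤ C²` a.e. is a composition of at most `m(C)` piecewise linear
`3/2`-biLipschitz orientation-preserving self-homeomorphisms of `[0,1]`, where `m(C)`
depends only on `C`. -/
theorem stmt9 (C : ℝ) (hC : 1 ≤ C) :
    ∃ m₀ : ℕ, ∀ φ : ℝ → ℝ, PLOn φ → φ 0 = 0 → φ 1 = 1 →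
      (∀ x ∈ Set.Icc (0 : ℝ) 1, ∀ y ∈ Set.Icc (0 : ℝ) 1, x ≤ y →
        (y - x) / C ^ 2 ≤ φ y - φ x ∧ φ y - φ x ≤ C ^ 2 * (y - x)) →
      ∃ (n : ℕ) (g : Fin n → ℝ → ℝ), n ≤ m₀ ∧
        (∀ i, PLOn (g i) ∧ g i 0 = 0 ∧ g i 1 = 1 ∧
          Set.MapsTo (g i) (Set.Icc (0 : ℝ) 1) (Set.Icc (0 : ℝ) 1) ∧
          ∀ x ∈ Set.Icc (0 : ℝ) 1, ∀ y ∈ Set.Icc (0 : ℝ) 1, x ≤ y →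
            (2 / 3) * (y - x) ≤ g i y - g i x ∧ g i y - g i x ≤ (3 / 2) * (y - x)) ∧
        ∀ x ∈ Set.Icc (0 : ℝ) 1, φ x = (List.ofFn g).foldr (· ∘ ·) id x := by
  classical
  refine ⟨⌈3 * (C ^ 2 - 1)⌉₊ + 1, ?_⟩
  set m₀ : ℕ := ⌈3 * (C ^ 2 - 1)⌉₊ + 1 with hm₀def
  intro φ hPL h0 h1 H
  have H' : Hyp φ C := H
  have hCsq : (1:ℝ) ≤ C ^ 2 := by nlinarith
  have hmr : (0:ℝ) < (m₀:ℝ) := by positivity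
  have hceil : 3 * (C ^ 2 - 1) ≤ (m₀:ℝ) := by
    have h1' := Nat.le_ceil (3 * (C ^ 2 - 1))
    have h2 : ((⌈3 * (C ^ 2 - 1)⌉₊ : ℕ) : ℝ) ≤ (m₀ : ℝ) := by
      exact_mod_cast Nat.le_succ _
    linarith
  have hsmall : (1 / (m₀:ℝ)) * (C ^ 2 - 1) ≤ 1 / 3 := by
    rw [one_div, inv_mul_eq_div, div_le_iff₀ hmr]
    linarith
  set F : ℕ → ℝ → ℝ := fun k => psi φ (1 - (k:ℝ)/(m₀:ℝ)) with hF
  have htmem : ∀ k : ℕ, k ≤ m₀ → 0 ≤ 1 - (k:ℝ)/(m₀:ℝ) ∧ 1 - (k:ℝ)/(m₀:ℝ) ≤ 1 := by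
    intro k hk
    have hk' : (k:ℝ) ≤ (m₀:ℝ) := by exact_mod_cast hk
    constructor
    · have : (k:ℝ)/(m₀:ℝ) ≤ 1 := by rw [div_le_one hmr]; exact hk'
      linarith
    · have : 0 ≤ (k:ℝ)/(m₀:ℝ) := by positivity
      linarith
  have hinj : ∀ k, k ≤ m₀ → Function.Injective (F k) := fun k hk =>
    (psi_strictMono hC h0 h1 H' (htmem k hk).1 (htmem k hk).2).injective
  refine ⟨m₀, fun i => F i ∘ Function.invFun (F (i + 1)), le_refl _, ?_, ?_⟩
  · intro i
    have hile : (i:ℕ) ≤ m₀ := Nat.le_of_lt i.isLt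
    have hi1 : (i:ℕ) + 1 ≤ m₀ := i.isLt
    have hta := htmem i hile
    have htb := htmem ((i:ℕ) + 1) hi1
    set a : ℝ := 1 - ((i:ℕ):ℝ)/(m₀:ℝ) with hadef
    set b : ℝ := 1 - (((i:ℕ) + 1 : ℕ):ℝ)/(m₀:ℝ) with hbdef
    have hFa : F (i:ℕ) = psi φ a := by rw [hF]
    have hFb : F ((i:ℕ) + 1) = psi φ b := by rw [hF]
    have injb : Function.Injective (psi φ b) :=
      (psi_strictMono hC h0 h1 H' htb.1 htb.2).injective
    have hab : a = b + 1 / (m₀:ℝ) := by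
      rw [hadef, hbdef]; push_cast; field_simp; ring
    refine ⟨?_, ?_, ?_, ?_, ?_⟩
    · show PLOn (F (i:ℕ) ∘ Function.invFun (F ((i:ℕ) + 1)))
      rw [hFa, hFb]
      exact PLOn_comp hC h0 h1 H' hPL hta.1 hta.2 htb.1 htb.2
    · show (F (i:ℕ) ∘ Function.invFun (F ((i:ℕ) + 1))) 0 = 0
      rw [hFa, hFb, Function.comp_apply]
      have h := Function.leftInverse_invFun injb 0
      rw [psi_zero h0 b] at h
      rw [h, psi_zero h0 a]
    · show (F (i:ℕ) ∘ Function.invFun (F ((i:ℕ) + 1))) 1 = 1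
      rw [hFa, hFb, Function.comp_apply]
      have h := Function.leftInverse_invFun injb 1
      rw [psi_one h1 b] at h
      rw [h, psi_one h1 a]
    · show MapsTo (F (i:ℕ) ∘ Function.invFun (F ((i:ℕ) + 1))) (Icc 0 1) (Icc 0 1)
      rw [hFa, hFb]
      intro x hx
      obtain ⟨u, hu, hux⟩ := psi_surj hC h0 h1 H' b hx
      have hφu := phi_mem h0 h1 H' hu
      rw [Function.comp_apply, ← hux, Function.leftInverse_invFun injb]
      simp only [psi, Phi_eq hu]
      constructor
      · nlinarith [hu.1, hu.2, hφu.1, hφu.2, hta.1, hta.2]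
      · nlinarith [hu.1, hu.2, hφu.1, hφu.2, hta.1, hta.2]
    · show ∀ x ∈ Icc (0:ℝ) 1, ∀ y ∈ Icc (0:ℝ) 1, x ≤ y →
        (2/3) * (y - x) ≤ (F (i:ℕ) ∘ Function.invFun (F ((i:ℕ) + 1))) y
            - (F (i:ℕ) ∘ Function.invFun (F ((i:ℕ) + 1))) x ∧
          (F (i:ℕ) ∘ Function.invFun (F ((i:ℕ) + 1))) y
            - (F (i:ℕ) ∘ Function.invFun (F ((i:ℕ) + 1))) x ≤ (3/2) * (y - x)
      rw [hFa, hFb]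
      intro x hx y hy hxy
      obtain ⟨u, hu, hux⟩ := psi_surj hC h0 h1 H' b hx
      obtain ⟨v, hv, hvy⟩ := psi_surj hC h0 h1 H' b hy
      have huv : u ≤ v := by
        apply (psi_strictMono hC h0 h1 H' htb.1 htb.2).le_iff_le.1
        rw [hux, hvy]; exact hxy
      have hgx : (psi φ a ∘ Function.invFun (psi φ b)) x = psi φ a u := by
        rw [Function.comp_apply, ← hux, Function.leftInverse_invFun injb]
      have hgy : (psi φ a ∘ Function.invFun (psi φ b)) y = psi φ a v := by
        rw [Function.comp_apply, ← hvy, Function.leftInverse_invFun injb]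
      have hbd := H u hu v hv huv
      have e_b : y - x = (v - u) + b * ((φ v - φ u) - (v - u)) := by
        rw [← hux, ← hvy]; simp only [psi, Phi_eq hu, Phi_eq hv]; ring
      have e_a : psi φ a v - psi φ a u
          = (v - u) + (b + 1/(m₀:ℝ)) * ((φ v - φ u) - (v - u)) := by
        simp only [psi, Phi_eq hu, Phi_eq hv]; rw [← hab]; ring
      have hcore := core (C ^ 2) (v - u) (φ v - φ u) b (1/(m₀:ℝ))
        (by linarith) hbd.1 hbd.2 hCsq htb.1 htb.2 (by rw [← hab]; exact hta.2)
        (by positivity) hsmall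
      rw [hgx, hgy, e_b, e_a]
      exact hcore
  · intro x hx
    have hxF : F m₀ x = x := by
      rw [hF]
      show psi φ (1 - (m₀:ℝ)/(m₀:ℝ)) x = x
      rw [div_self (ne_of_gt hmr)]
      simp [psi]
    have h := foldr_eval m₀ F hinj x hxF
    rw [h, hF]
    show φ x = psi φ (1 - ((0:ℕ):ℝ)/(m₀:ℝ)) x
    simp [psi, Phi_eq hx]
end
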